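/- Let H be a hypergraph on n vertices without isolated vertices containing two non-adjacent vertices (i.e., two vertices with no common edge). Then the second smallest normalized Laplacian eigenvalue satisfies λ_{n-1}(H) ≤ 1. -/

import Mathlib

open Finset Matrix

variable {n : ℕ}

def hdeg (E : Finset (Finset (Fin n))) (v : Fin n) : ℕ :=
  (E.filter fun e => v ∈ e).card

def codeg (E : Finset (Finset (Fin n))) (u v : Fin n) : ℕ :=
  (E.filter fun e => u ∈ e ∧ v ∈ e).card

noncomputable def adjMat (E : Finset (Finset (Fin n))) : Matrix (Fin n) (Fin n) ℝ :=
  fun u v => if u = v then 0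
    else ∑ e ∈ E.filter (fun e => u ∈ e ∧ v ∈ e), (1 : ℝ) / ((e.card : ℝ) - 1)

noncomputable def lapMat (E : Finset (Finset (Fin n))) : Matrix (Fin n) (Fin n) ℝ :=
  Matrix.diagonal (fun v => (hdeg E v : ℝ)) - adjMat E

noncomputable def normLap (E : Finset (Finset (Fin n))) : Matrix (Fin n) (Fin n) ℝ :=
  Matrix.diagonal (fun v => (hdeg E v : ℝ) ^ (-(1/2) : ℝ)) * lapMat E *
    Matrix.diagonal (fun v => (hdeg E v : ℝ) ^ (-(1/2) : ℝ))

noncomputable def eigsAsc (M : Matrix (Fin n) (Fin n) ℝ) : Fin n → ℝ :=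
  if h : M.IsHermitian then (h.eigenvalues ∘ Tuple.sort h.eigenvalues) else 0

noncomputable def toE (v : Fin n → ℝ) : EuclideanSpace ℝ (Fin n) :=
  (WithLp.equiv 2 (Fin n → ℝ)).symm v

lemma inner_toE (u v : Fin n → ℝ) : (inner ℝ (toE u) (toE v) : ℝ) = u ⬝ᵥ v := by
  simp [toE, PiLp.inner_apply, dotProduct, mul_comm]

lemma repr_mulVec (M : Matrix (Fin n) (Fin n) ℝ) (hM : M.IsHermitian)
    (v : Fin n → ℝ) (i : Fin n) :
    hM.eigenvectorBasis.repr (toE (M *ᵥ v)) i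
      = hM.eigenvalues i * hM.eigenvectorBasis.repr (toE v) i := by
  rw [OrthonormalBasis.repr_apply_apply, OrthonormalBasis.repr_apply_apply]
  have hb : hM.eigenvectorBasis i = toE ⇑(hM.eigenvectorBasis i) := rfl
  rw [hb, inner_toE, inner_toE, dotProduct_mulVec, ← mulVec_transpose]
  have ht : Mᵀ = M := by
    have := hM; rwa [Matrix.IsHermitian, conjTranspose_eq_transpose_of_trivial] at this
  rw [ht, hM.mulVec_eigenvectorBasis, smul_dotProduct, smul_eq_mul]

lemma quad_form_eq (M : Matrix (Fin n) (Fin n) ℝ) (hM : M.IsHermitian)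
    (v : Fin n → ℝ) :
    v ⬝ᵥ (M *ᵥ v) = ∑ i, hM.eigenvalues i * (hM.eigenvectorBasis.repr (toE v) i)^2 := by
  rw [← inner_toE v (M *ᵥ v), ← (hM.eigenvectorBasis.repr).inner_map_map]
  simp only [PiLp.inner_apply, RCLike.inner_apply, starRingEnd_apply, star_trivial]
  exact Finset.sum_congr rfl fun i _ => by rw [repr_mulVec M hM v i]; ring

lemma norm_form_eq (M : Matrix (Fin n) (Fin n) ℝ) (hM : M.IsHermitian)
    (v : Fin n → ℝ) :
    v ⬝ᵥ v = ∑ i, (hM.eigenvectorBasis.repr (toE v) i)^2 := by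
  have h := (hM.eigenvectorBasis.repr).inner_map_map (toE v) (toE v)
  rw [← inner_toE v v]
  simpa only [PiLp.inner_apply, RCLike.inner_apply, starRingEnd_apply, star_trivial, sq] using h.symm

lemma adjMat_symm (E : Finset (Finset (Fin n))) (u v : Fin n) :
    adjMat E u v = adjMat E v u := by
  unfold adjMat
  by_cases h : u = v
  · simp [h]
  · rw [if_neg h, if_neg (Ne.symm h)]
    apply Finset.sum_congr _ (fun _ _ => rfl)
    apply Finset.filter_congr
    intro e _
    simp [and_comm]

lemma normLap_apply (E : Finset (Finset (Fin n))) (u v : Fin n) :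
    normLap E u v = (hdeg E u : ℝ) ^ (-(1/2) : ℝ) * lapMat E u v *
      (hdeg E v : ℝ) ^ (-(1/2) : ℝ) := by
  unfold normLap
  rw [Matrix.mul_diagonal, Matrix.diagonal_mul]

lemma normLap_isHermitian (E : Finset (Finset (Fin n))) : (normLap E).IsHermitian := by
  rw [Matrix.IsHermitian, conjTranspose_eq_transpose_of_trivial]
  ext u v
  rw [Matrix.transpose_apply, normLap_apply, normLap_apply]
  unfold lapMat
  simp only [Matrix.sub_apply, Matrix.diagonal_apply]
  rw [adjMat_symm]
  by_cases h : u = v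
  · subst h; ring
  · rw [if_neg h, if_neg (Ne.symm h)]; ring

lemma normLap_diag (E : Finset (Finset (Fin n))) (v : Fin n) (hv : 0 < hdeg E v) :
    normLap E v v = 1 := by
  rw [normLap_apply]
  have h0 : adjMat E v v = 0 := by simp [adjMat]
  have hd : (0:ℝ) < (hdeg E v : ℝ) := by exact_mod_cast hv
  unfold lapMat
  simp only [Matrix.sub_apply, Matrix.diagonal_apply_eq, h0, sub_zero]
  rw [mul_comm, ← mul_assoc, ← Real.rpow_add hd]
  nth_rewrite 2 [show ((hdeg E v : ℝ)) = (hdeg E v : ℝ) ^ (1:ℝ) from (Real.rpow_one _).symm]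
  rw [← Real.rpow_add hd]
  norm_num

lemma normLap_offdiag (E : Finset (Finset (Fin n))) (u v : Fin n) (huv : u ≠ v)
    (h : ∀ e ∈ E, ¬(u ∈ e ∧ v ∈ e)) : normLap E u v = 0 := by
  rw [normLap_apply]
  have ha : adjMat E u v = 0 := by
    unfold adjMat
    rw [if_neg huv, Finset.filter_false_of_mem h, Finset.sum_empty]
  unfold lapMat
  simp [Matrix.diagonal_apply_ne _ huv, ha]

theorem stmt14 (n : ℕ) (E : Finset (Finset (Fin n)))
    (hcard : ∀ e ∈ E, 2 ≤ e.card) (hiso : ∀ v : Fin n, 0 < hdeg E v)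
    (z w : Fin n) (hzw : z ≠ w) (hna : ∀ e ∈ E, ¬(z ∈ e ∧ w ∈ e)) :
    eigsAsc (normLap E) ⟨1, by
      have h2 : 1 < Fintype.card (Fin n) := Fintype.one_lt_card_iff.mpr ⟨z, w, hzw⟩
      simpa using h2⟩ ≤ 1 := by
  have hM : (normLap E).IsHermitian := normLap_isHermitian E
  have hn : 1 < n := by
    have h2 : 1 < Fintype.card (Fin n) := Fintype.one_lt_card_iff.mpr ⟨z, w, hzw⟩
    simpa using h2
  set M := normLap E with hMdef
  set lam := hM.eigenvalues with hlam
  set σ := Tuple.sort hM.eigenvalues with hσ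
  have hgoal : eigsAsc M ⟨1, by simpa using Fintype.one_lt_card_iff.mpr ⟨z, w, hzw⟩⟩
      = lam (σ ⟨1, hn⟩) := by
    rw [eigsAsc, dif_pos hM]
    rfl
  rw [hgoal]
  by_contra hcon
  push_neg at hcon
  set i0 : Fin n := ⟨0, lt_trans one_pos hn⟩ with hi0
  have hmono : Monotone (lam ∘ σ) := Tuple.monotone_sort lam
  have hgt : ∀ i : Fin n, i ≠ σ i0 → 1 < lam i := by
    intro i hi
    have hj : σ (σ.symm i) = i := σ.apply_symm_apply i
    have hne : σ.symm i ≠ i0 := by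
      intro h
      exact hi (by rw [← hj, h])
    have h1le : (⟨1, hn⟩ : Fin n) ≤ σ.symm i := by
      rw [Fin.le_def]
      have hval : (σ.symm i).val ≠ 0 := fun h => hne (Fin.ext h)
      show 1 ≤ (σ.symm i).val
      omega
    calc (1:ℝ) < lam (σ ⟨1, hn⟩) := hcon
      _ ≤ (lam ∘ σ) (σ.symm i) := hmono h1le
      _ = lam i := by simp [hj]
  set B := hM.eigenvectorBasis with hB
  set ez : Fin n → ℝ := Pi.single z 1 with hez
  set ew : Fin n → ℝ := Pi.single w 1 with hew
  set cz := B.repr (toE ez) (σ i0) with hcz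
  set cw := B.repr (toE ew) (σ i0) with hcw
  obtain ⟨α, β, hab, hc0⟩ : ∃ α β : ℝ, ¬(α = 0 ∧ β = 0) ∧ α * cz + β * cw = 0 := by
    by_cases h : cz = 0 ∧ cw = 0
    · exact ⟨1, 0, by simp, by simp [h.1, h.2]⟩
    · exact ⟨cw, -cz, fun hh => h ⟨by simpa using hh.2, hh.1⟩, by ring⟩
  set v : Fin n → ℝ := α • ez + β • ew with hv
  have htoE : toE v = α • toE ez + β • toE ew := rfl
  have hrepr : B.repr (toE v) (σ i0) = 0 := by
    have e1 : B.repr (α • toE ez) = α • B.repr (toE ez) := B.repr.map_smul α (toE ez)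
    have e2 : B.repr (β • toE ew) = β • B.repr (toE ew) := B.repr.map_smul β (toE ew)
    rw [htoE, map_add, e1, e2]
    simpa using hc0
  have key : ∀ (a b : Fin n), Pi.single a (1:ℝ) ⬝ᵥ (M *ᵥ Pi.single b 1) = M a b := by
    intro a b
    rw [single_dotProduct, Matrix.mulVec_single]
    simp
  have key2 : ∀ (a b : Fin n), Pi.single a (1:ℝ) ⬝ᵥ Pi.single b (1:ℝ)
      = if a = b then 1 else 0 := by
    intro a b
    rw [single_dotProduct, Pi.single_apply]
    simp [eq_comm]
  have hzz : M z z = 1 := normLap_diag E z (hiso z)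
  have hww : M w w = 1 := normLap_diag E w (hiso w)
  have hzw0 : M z w = 0 := normLap_offdiag E z w hzw hna
  have hwz0 : M w z = 0 := normLap_offdiag E w z hzw.symm
    (fun e he hh => hna e he ⟨hh.2, hh.1⟩)
  have hquad : v ⬝ᵥ (M *ᵥ v) = α^2 + β^2 := by
    simp only [hv, hez, hew, Matrix.mulVec_add, Matrix.mulVec_smul, dotProduct_add,
      dotProduct_smul, add_dotProduct, smul_dotProduct, smul_eq_mul,
      key, hzz, hww, hzw0, hwz0]
    ring
  have hnorm : v ⬝ᵥ v = α^2 + β^2 := by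
    simp only [hv, hez, hew, dotProduct_add, dotProduct_smul,
      add_dotProduct, smul_dotProduct, smul_eq_mul, key2,
      if_pos rfl, if_neg hzw, if_neg hzw.symm]
    norm_num
    ring
  have hpos : 0 < α^2 + β^2 := by
    rcases not_and_or.mp hab with h | h
    · have := pow_pos (abs_pos.mpr h) 2
      nlinarith [sq_nonneg β, sq_abs α]
    · nlinarith [sq_nonneg α, pow_pos (abs_pos.mpr h) 2, sq_abs β]
  set c := fun i => B.repr (toE v) i with hcdef
  have hQ : v ⬝ᵥ (M *ᵥ v) = ∑ i, lam i * (c i)^2 := quad_form_eq M hM v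
  have hN : v ⬝ᵥ v = ∑ i, (c i)^2 := norm_form_eq M hM v
  have hsum_pos : 0 < ∑ i, (c i)^2 := by rw [← hN, hnorm]; exact hpos
  have hex : ∃ i, c i ≠ 0 := by
    by_contra h
    push_neg at h
    rw [Finset.sum_eq_zero (fun i _ => by rw [h i]; ring)] at hsum_pos
    exact lt_irrefl 0 hsum_pos
  obtain ⟨i, hi⟩ := hex
  have hine : i ≠ σ i0 := fun h => hi (by show B.repr (toE v) i = 0; rw [h]; exact hrepr)
  have hlt : ∑ j, (c j)^2 < ∑ j, lam j * (c j)^2 := by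
    apply Finset.sum_lt_sum
    · intro j _
      by_cases hj : j = σ i0
      · have : c j = 0 := by show B.repr (toE v) j = 0; rw [hj]; exact hrepr
        simp [this]
      · have h1 := le_of_lt (hgt j hj)
        nlinarith [sq_nonneg (c j)]
    · refine ⟨i, Finset.mem_univ i, ?_⟩
      have h1 := hgt i hine
      have h2 : 0 < (c i)^2 := pow_pos (abs_pos.mpr hi) 2 |>.trans_eq (sq_abs _)
      nlinarith
  rw [hquad] at hQ
  rw [hnorm] at hN
  linarith
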